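/- Let H be an infinite-dimensional real Hilbert space and let T : H →L[ℝ] H be a bounded linear operator. Then T is a finite real linear combination of orthogonal (unitary) operators: there exist n ∈ ℕ, real scalars c : Fin n → ℝ, and orthogonal operators U : Fin n → (H →L[ℝ] H) such that T = ∑ i, c i • U i. -/

import Mathlib

open Filter Topology
open scoped ENNReal RealInnerProductSpace

set_option linter.unusedSectionVars false

namespace BddOrthComb

/-- scalar comparison sequence -/
noncomputable def tseq : ℕ → ℝ
  | 0 => 0
  | n+1 => (1 + tseq n ^ 2) / 2

noncomputable def yseq {A : Type*} [NormedRing A] [NormedAlgebra ℝ A] (x : A) : ℕ → A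
  | 0 => 0
  | n+1 => (2⁻¹ : ℝ) • (x + yseq x n * yseq x n)

lemma tseq_nonneg : ∀ n, 0 ≤ tseq n
  | 0 => le_refl 0
  | n+1 => by have := tseq_nonneg n; simp only [tseq]; positivity

lemma tseq_le_one : ∀ n, tseq n ≤ 1
  | 0 => zero_le_one
  | n+1 => by have h1 := tseq_nonneg n; have h2 := tseq_le_one n; simp only [tseq]; nlinarith [sq_nonneg ((1 + tseq n ^ 2) / 2 - 1)]

lemma tseq_succ_le : ∀ n, tseq n ≤ tseq (n+1)
  | 0 => by norm_num [tseq]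
  | n+1 => by
      have h0 := tseq_nonneg n
      have h1 := tseq_succ_le n
      simp only [tseq]; nlinarith [sq_nonneg ((1 + tseq n ^ 2) / 2 - 1)]

lemma tseq_mono : Monotone tseq := monotone_nat_of_le_succ tseq_succ_le

lemma tseq_tendsto : Tendsto tseq atTop (𝓝 1) := by
  have hbdd : BddAbove (Set.range tseq) := ⟨1, by rintro _ ⟨n, rfl⟩; exact tseq_le_one n⟩
  have h := tendsto_atTop_ciSup tseq_mono hbdd
  set L := ⨆ n, tseq n with hL
  have h1 : Tendsto (fun n => tseq (n+1)) atTop (𝓝 L) := h.comp (tendsto_add_atTop_nat 1)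
  have h2 : Tendsto (fun n => (1 + tseq n ^ 2) / 2) atTop (𝓝 ((1 + L ^ 2) / 2)) :=
    (tendsto_const_nhds.add (h.pow 2)).div_const 2
  have h3 : L = (1 + L ^ 2) / 2 := by
    refine tendsto_nhds_unique h1 ?_
    simpa only [tseq] using h2
  have h4 : (L - 1) ^ 2 = 0 := by nlinarith
  have h5 : L = 1 := by
    have := pow_eq_zero_iff (n := 2) (by norm_num) |>.mp h4
    linarith
  rwa [h5] at h


variable {A : Type*} [NormedRing A] [NormedAlgebra ℝ A] [CompleteSpace A]
  [StarRing A] [ContinuousStar A] [StarModule ℝ A]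

lemma yseq_norm_le (x : A) (hx : ‖x‖ ≤ 1) : ∀ n, ‖yseq x n‖ ≤ tseq n
  | 0 => by simp [yseq, tseq]
  | n+1 => by
      have ih := yseq_norm_le x hx n
      have h0 := norm_nonneg (yseq x n)
      calc ‖yseq x (n+1)‖ = 2⁻¹ * ‖x + yseq x n * yseq x n‖ := by
            rw [show yseq x (n+1) = (2⁻¹ : ℝ) • (x + yseq x n * yseq x n) from rfl,
              norm_smul]
            norm_num
        _ ≤ 2⁻¹ * (‖x‖ + ‖yseq x n‖ * ‖yseq x n‖) := by
            have := norm_add_le x (yseq x n * yseq x n)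
            have := norm_mul_le (yseq x n) (yseq x n)
            nlinarith
        _ ≤ (1 + tseq n ^ 2) / 2 := by nlinarith
        _ = tseq (n+1) := rfl

lemma yseq_diff_le (x : A) (hx : ‖x‖ ≤ 1) :
    ∀ n, ‖yseq x (n+1) - yseq x n‖ ≤ tseq (n+1) - tseq n
  | 0 => by
      simp only [yseq, tseq]
      simp [norm_smul]
      linarith
  | n+1 => by
      have ih := yseq_diff_le x hx n
      have hn := yseq_norm_le x hx n
      have hn1 := yseq_norm_le x hx (n+1)
      have h0 := norm_nonneg (yseq x (n+1) - yseq x n)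
      have hdd : yseq x (n+2) - yseq x (n+1)
          = (2⁻¹ : ℝ) • (yseq x (n+1) * (yseq x (n+1) - yseq x n)
              + (yseq x (n+1) - yseq x n) * yseq x n) := by
        show (2⁻¹ : ℝ) • (x + yseq x (n+1) * yseq x (n+1))
            - (2⁻¹ : ℝ) • (x + yseq x n * yseq x n) = _
        rw [← smul_sub]
        congr 1
        noncomm_ring
      rw [hdd]
      have hmono := tseq_mono (Nat.le_succ n)
      calc ‖(2⁻¹ : ℝ) • (yseq x (n+1) * (yseq x (n+1) - yseq x n)
              + (yseq x (n+1) - yseq x n) * yseq x n)‖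
          = 2⁻¹ * ‖yseq x (n+1) * (yseq x (n+1) - yseq x n)
              + (yseq x (n+1) - yseq x n) * yseq x n‖ := by rw [norm_smul]; norm_num
        _ ≤ 2⁻¹ * (‖yseq x (n+1)‖ * ‖yseq x (n+1) - yseq x n‖
              + ‖yseq x (n+1) - yseq x n‖ * ‖yseq x n‖) := by
            have h1 := norm_add_le (yseq x (n+1) * (yseq x (n+1) - yseq x n))
              ((yseq x (n+1) - yseq x n) * yseq x n)
            have h2 := norm_mul_le (yseq x (n+1)) (yseq x (n+1) - yseq x n)
            have h3 := norm_mul_le (yseq x (n+1) - yseq x n) (yseq x n)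
            nlinarith
        _ ≤ 2⁻¹ * ((tseq (n+1) + tseq n) * (tseq (n+1) - tseq n)) := by
            have h4 := tseq_nonneg n
            nlinarith
        _ = tseq (n+2) - tseq (n+1) := by
            show _ = (1 + tseq (n+1) ^ 2) / 2 - (1 + tseq n ^ 2) / 2
            ring

lemma exists_sqrt_one_sub (x : A) (hx : ‖x‖ ≤ 1) :
    ∃ s : A, s * s = 1 - x ∧ (∀ b : A, Commute x b → Commute s b) ∧
      (star x = x → star s = s) := by
  -- Cauchy
  have hsummajor : Summable (fun n => tseq (n+1) - tseq n) := by
    apply summable_of_sum_range_le (c := 1)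
    · intro n; have := tseq_mono (Nat.le_succ n); linarith
    · intro n
      rw [Finset.sum_range_sub fun i => tseq i]
      have := tseq_le_one n; have := tseq_nonneg 0; have h0 : tseq 0 = 0 := rfl
      simp [h0]; linarith [tseq_le_one n]
  have hsum : Summable (fun n => dist (yseq x n) (yseq x (n+1))) := by
    refine hsummajor.of_nonneg_of_le (fun n => dist_nonneg) (fun n => ?_)
    rw [dist_eq_norm, norm_sub_rev]
    exact yseq_diff_le x hx n
  obtain ⟨z, hz⟩ := cauchySeq_tendsto_of_complete (cauchySeq_of_summable_dist hsum)
  have hz1 : Tendsto (fun n => yseq x (n+1)) atTop (𝓝 z) := hz.comp (tendsto_add_atTop_nat 1)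
  have hz2 : Tendsto (fun n => (2⁻¹ : ℝ) • (x + yseq x n * yseq x n)) atTop
      (𝓝 ((2⁻¹ : ℝ) • (x + z * z))) :=
    ((tendsto_const_nhds.add (hz.mul hz)).const_smul _)
  have hzz : z = (2⁻¹ : ℝ) • (x + z * z) := tendsto_nhds_unique hz1 hz2
  have hz2z : z * z = z + z - x := by
    have h2 : (2 : ℝ) • z = x + z * z := by
      conv_lhs => rw [hzz]
      rw [smul_smul]; norm_num
    have h3 : z + z = x + z * z := by rw [← two_smul ℝ z]; exact h2
    rw [h3]; abel
  refine ⟨1 - z, ?_, ?_, ?_⟩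
  · have : (1 - z) * (1 - z) = 1 - z - z + z * z := by noncomm_ring
    rw [this, hz2z]; abel
  · intro b hb
    have hyn : ∀ n, Commute (yseq x n) b := by
      intro n; induction n with
      | zero => exact Commute.zero_left b
      | succ n ih =>
        show Commute ((2⁻¹ : ℝ) • (x + yseq x n * yseq x n)) b
        exact ((hb.add_left (ih.mul_left ih))).smul_left _
    have e1 : Tendsto (fun n => yseq x n * b) atTop (𝓝 (z * b)) := hz.mul tendsto_const_nhds
    have e2 : Tendsto (fun n => b * yseq x n) atTop (𝓝 (b * z)) := tendsto_const_nhds.mul hz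
    have e1' : Tendsto (fun n => b * yseq x n) atTop (𝓝 (z * b)) := by
      refine e1.congr fun n => (hyn n).eq
    have hzb : z * b = b * z := tendsto_nhds_unique e1' e2
    exact (Commute.one_left b).sub_left hzb
  · intro hsx
    have hyn : ∀ n, star (yseq x n) = yseq x n := by
      intro n; induction n with
      | zero => simp [yseq]
      | succ n ih =>
        show star ((2⁻¹ : ℝ) • (x + yseq x n * yseq x n)) = _
        rw [star_smul, star_add, star_mul, ih, hsx]
        simp [yseq]
    have e1 : Tendsto (fun n => star (yseq x n)) atTop (𝓝 (star z)) := hz.star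
    have e2 : Tendsto (fun n => star (yseq x n)) atTop (𝓝 z) := by
      refine hz.congr fun n => (hyn n).symm
    have : star z = z := tendsto_nhds_unique e1 e2
    rw [star_sub, star_one, this]


/-- the span of the unitary group -/
noncomputable def uspan (A : Type*) [NormedRing A] [NormedAlgebra ℝ A] [StarRing A] : Submodule ℝ A :=
  Submodule.span ℝ (unitary A : Set A)

lemma unitary_mem_uspan {u : A} (hu : u ∈ unitary A) : u ∈ uspan A :=
  Submodule.subset_span hu

lemma uspan_mul_mem {u x : A} (hu : u ∈ unitary A) (hx : x ∈ uspan A) :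
    u * x ∈ uspan A := by
  induction hx using Submodule.span_induction with
  | mem y hy => exact unitary_mem_uspan (mul_mem hu hy)
  | zero => simpa using (uspan A).zero_mem
  | add y z _ _ hy hz => rw [mul_add]; exact add_mem hy hz
  | smul c y _ hy => rw [mul_smul_comm]; exact Submodule.smul_mem _ _ hy

/-- skew elements of norm at most one -/
lemma skew_mem_uspan_of_norm_le (B : A) (hB : star B = -B) (h1 : ‖B‖ ≤ 1) :
    B ∈ uspan A := by
  obtain ⟨s, hs2, hsc, hss⟩ := exists_sqrt_one_sub (-(B * B)) (by
    rw [norm_neg]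
    calc ‖B * B‖ ≤ ‖B‖ * ‖B‖ := norm_mul_le B B
    _ ≤ 1 := by nlinarith [norm_nonneg B])
  have hs2' : s * s = 1 + B * B := by rw [hs2]; abel
  have hcom : Commute s B := hsc B (by
    show -(B * B) * B = B * -(B * B); noncomm_ring)
  have hstars : star s = s := hss (by
    rw [star_neg, star_mul, hB]; noncomm_ring)
  set U := B + s with hU
  have hstarU : star U = -B + s := by rw [hU, star_add, hB, hstars]
  have h1 : star U * U = 1 := by
    rw [hstarU, hU]
    have : (-B + s) * (B + s) = s * s - B * B + (s * B - B * s) := by noncomm_ring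
    rw [this, hcom.eq, hs2']
    abel
  have h2 : U * star U = 1 := by
    rw [hstarU, hU]
    have : (B + s) * (-B + s) = s * s - B * B + (B * s - s * B) := by noncomm_ring
    rw [this, hcom.eq, hs2']
    abel
  have hUu : U ∈ unitary A := Unitary.mem_iff.mpr ⟨h1, h2⟩
  have hBrep : B = (2⁻¹ : ℝ) • U + (-(2⁻¹) : ℝ) • star U := by
    rw [hstarU, hU]; module
  rw [hBrep]
  exact add_mem (Submodule.smul_mem _ _ (unitary_mem_uspan hUu))
    (Submodule.smul_mem _ _ (unitary_mem_uspan (Unitary.star_mem hUu)))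


/-- self-adjoint contractions commuting with a complex structure -/
lemma sa_mem_uspan_of_norm_le (J x : A) (hJs : star J = -J) (hJ2 : J * J = -1)
    (hx : star x = x) (h1 : ‖x‖ ≤ 1) (hcom : Commute x J) : x ∈ uspan A := by
  obtain ⟨s, hs2, hsc, hss⟩ := exists_sqrt_one_sub (x * x) (by
    calc ‖x * x‖ ≤ ‖x‖ * ‖x‖ := norm_mul_le x x
    _ ≤ 1 := by nlinarith [norm_nonneg x])
  have hsx : Commute s x := hsc x (Commute.mul_left rfl rfl)
  have hsJ : Commute s J := hsc J ((hcom).mul_left hcom)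
  have hstars : star s = s := hss (by rw [star_mul, hx])
  set U := x + J * s with hU
  have hstarU : star U = x - J * s := by
    rw [hU, star_add, hx, star_mul, hstars, hJs]
    rw [mul_neg, ← hsJ.eq]
    abel
  have hJsJs : (J * s) * (J * s) = -(s * s) := by
    calc (J * s) * (J * s) = J * (s * J) * s := by noncomm_ring
    _ = J * (J * s) * s := by rw [hsJ.eq]
    _ = (J * J) * (s * s) := by noncomm_ring
    _ = -(s * s) := by rw [hJ2]; noncomm_ring
  have hxJs : x * (J * s) = (J * s) * x := by
    calc x * (J * s) = (x * J) * s := by noncomm_ring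
    _ = (J * x) * s := by rw [hcom.eq]
    _ = J * (x * s) := by noncomm_ring
    _ = J * (s * x) := by rw [← hsx.eq]
    _ = (J * s) * x := by noncomm_ring
  have h1' : star U * U = 1 := by
    rw [hstarU, hU]
    have : (x - J * s) * (x + J * s)
        = x * x - (J * s) * (J * s) + (x * (J * s) - (J * s) * x) := by noncomm_ring
    rw [this, hxJs, hJsJs, hs2]
    abel
  have h2' : U * star U = 1 := by
    rw [hstarU, hU]
    have : (x + J * s) * (x - J * s)
        = x * x - (J * s) * (J * s) + ((J * s) * x - x * (J * s)) := by noncomm_ring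
    rw [this, hxJs, hJsJs, hs2]
    abel
  have hUu : U ∈ unitary A := Unitary.mem_iff.mpr ⟨h1', h2'⟩
  have hrep : x = (2⁻¹ : ℝ) • U + (2⁻¹ : ℝ) • star U := by
    rw [hstarU, hU]; module
  rw [hrep]
  exact add_mem (Submodule.smul_mem _ _ (unitary_mem_uspan hUu))
    (Submodule.smul_mem _ _ (unitary_mem_uspan (Unitary.star_mem hUu)))

/-- skew elements, no norm restriction -/
lemma skew_mem_uspan (B : A) (hB : star B = -B) : B ∈ uspan A := by
  have hr : (0:ℝ) < ‖B‖ + 1 := by positivity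
  have h1 : B = (‖B‖ + 1) • ((‖B‖ + 1)⁻¹ • B) := by
    rw [smul_smul, mul_inv_cancel₀ hr.ne', one_smul]
  rw [h1]
  refine Submodule.smul_mem _ _ (skew_mem_uspan_of_norm_le _ ?_ ?_)
  · rw [star_smul, hB]; simp
  · rw [norm_smul, Real.norm_eq_abs, abs_of_pos (by positivity)]
    rw [inv_mul_le_one₀ hr] <;> linarith [norm_nonneg B]

lemma sa_mem_uspan (J x : A) (hJs : star J = -J) (hJ2 : J * J = -1)
    (hx : star x = x) (hcom : Commute x J) : x ∈ uspan A := by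
  have hr : (0:ℝ) < ‖x‖ + 1 := by positivity
  have h1 : x = (‖x‖ + 1) • ((‖x‖ + 1)⁻¹ • x) := by
    rw [smul_smul, mul_inv_cancel₀ hr.ne', one_smul]
  rw [h1]
  refine Submodule.smul_mem _ _ (sa_mem_uspan_of_norm_le J _ hJs hJ2 ?_ ?_ ?_)
  · rw [star_smul, hx]; simp
  · rw [norm_smul, Real.norm_eq_abs, abs_of_pos (by positivity)]
    rw [inv_mul_le_one₀ hr] <;> linarith [norm_nonneg x]
  · exact hcom.smul_left _

/-- anything commuting with the complex structure -/
lemma commJ_mem_uspan (J P : A) (hJs : star J = -J) (hJ2 : J * J = -1)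
    (hcom : Commute P J) : P ∈ uspan A := by
  have hstarP : Commute (star P) J := by
    have h := congrArg star hcom.eq
    rw [star_mul, star_mul, hJs] at h
    show star P * J = J * star P
    have h2 : -J * star P = star P * -J := by
      rw [← hJs]; rw [← star_mul, ← star_mul, hcom.eq]
    rw [neg_mul, mul_neg, neg_inj] at h2
    exact h2.symm
  set a := (2⁻¹ : ℝ) • (P + star P) with ha
  set b := (2⁻¹ : ℝ) • (P - star P) with hb
  have hab : P = a + b := by rw [ha, hb]; module
  have hsa : star a = a := by
    rw [ha, star_smul, star_add, star_star, star_trivial, add_comm]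
  have hsb : star b = -b := by
    rw [hb, star_smul, star_sub, star_star, star_trivial, ← smul_neg, neg_sub]
  have hca : Commute a J := by
    rw [ha]; exact (hcom.add_left hstarP).smul_left _
  rw [hab]
  exact add_mem (sa_mem_uspan J a hJs hJ2 hsa hca) (skew_mem_uspan b hsb)


lemma all_mem_uspan (J C T : A) (hJs : star J = -J) (hJ2 : J * J = -1)
    (hCu : C ∈ unitary A) (hCs : star C = C) (hCJ : C * J = -(J * C)) :
    T ∈ uspan A := by
  have hCC : C * C = 1 := by
    have := (Unitary.mem_iff.mp hCu).1
    rwa [hCs] at this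
  set R := T + J * T * J with hR
  set P := (2⁻¹ : ℝ) • (T - J * T * J) with hP
  set Q := (2⁻¹ : ℝ) • R with hQ
  have hTPQ : T = P + Q := by rw [hP, hQ, hR]; module
  have hPJ : Commute P J := by
    show P * J = J * P
    rw [hP, smul_mul_assoc, mul_smul_comm]
    congr 1
    have e1 : (T - J * T * J) * J = T * J - J * T * (J * J) := by noncomm_ring
    have e2 : J * (T - J * T * J) = J * T - (J * J) * (T * J) := by noncomm_ring
    rw [e1, e2, hJ2]
    noncomm_ring
  have hRJ : R * J = -(J * R) := by
    have e1 : R * J = T * J + J * T * (J * J) := by rw [hR]; noncomm_ring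
    have e2 : J * R = J * T + (J * J) * (T * J) := by rw [hR]; noncomm_ring
    rw [e1, e2, hJ2]
    noncomm_ring
  set M := C * Q with hM
  have hQM : Q = C * M := by
    rw [hM, ← mul_assoc, hCC, one_mul]
  have hMJ : Commute M J := by
    show M * J = J * M
    have hQJ : Q * J = -(J * Q) := by
      rw [hQ, smul_mul_assoc, mul_smul_comm, hRJ, smul_neg]
    have hJC : J * C = -(C * J) := by
      rw [hCJ]; rw [neg_neg]
    calc M * J = C * (Q * J) := by rw [hM, mul_assoc]
      _ = C * (-(J * Q)) := by rw [hQJ]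
      _ = -(C * J) * Q := by noncomm_ring
      _ = (J * C) * Q := by rw [← hJC]
      _ = J * M := by rw [hM, mul_assoc]
  have hPmem : P ∈ uspan A := commJ_mem_uspan J P hJs hJ2 hPJ
  have hMmem : M ∈ uspan A := commJ_mem_uspan J M hJs hJ2 hMJ
  have hQmem : Q ∈ uspan A := by rw [hQM]; exact uspan_mul_mem hCu hMmem
  rw [hTPQ]; exact add_mem hPmem hQmem


section Perm
variable {ι : Type*} (σ : ι ≃ ι) (ε : ι → ℝ)

local notation "ℓ²" => lp (fun _ : ι => ℝ) 2

lemma eps_sq (hε : ∀ i, ε i = 1 ∨ ε i = -1) (i : ι) : ε i * ε i = 1 := by rcases hε i with h | h <;> rw [h] <;> norm_num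

lemma eps_norm (hε : ∀ i, ε i = 1 ∨ ε i = -1) (i : ι) : ‖ε i‖ = 1 := by rcases hε i with h | h <;> rw [h] <;> norm_num

private lemma two_toReal_pos : (0:ℝ) < (2 : ℝ≥0∞).toReal := by norm_num

noncomputable def permFun (hε : ∀ i, ε i = 1 ∨ ε i = -1) (x : ℓ²) : ℓ² :=
  ⟨fun i => ε i * x (σ i), by
    apply memℓp_gen
    have hx : Summable (fun j => ‖x j‖ ^ (2 : ℝ≥0∞).toReal) :=
      (lp.memℓp x).summable two_toReal_pos
    have h2 : Summable (fun i => ‖x (σ i)‖ ^ (2 : ℝ≥0∞).toReal) :=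
      (σ.summable_iff (f := fun j => ‖x j‖ ^ (2 : ℝ≥0∞).toReal)).2 hx
    refine h2.congr fun i => ?_
    rw [norm_mul, eps_norm ε hε, one_mul]⟩

lemma permFun_apply (hε : ∀ i, ε i = 1 ∨ ε i = -1) (x : ℓ²) (i : ι) : (permFun σ ε hε x : ∀ _ : ι, ℝ) i = ε i * x (σ i) := rfl

noncomputable def permEquiv (hε : ∀ i, ε i = 1 ∨ ε i = -1) : ℓ² ≃ₗᵢ[ℝ] ℓ² where
  toFun := permFun σ ε hε
  invFun := permFun σ.symm (fun j => ε (σ.symm j)) (fun j => hε _)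
  map_add' x y := by
    apply lp.ext
    funext i
    simp only [permFun_apply, lp.coeFn_add, Pi.add_apply]
    ring
  map_smul' c x := by
    apply lp.ext
    funext i
    simp only [permFun_apply, lp.coeFn_smul, Pi.smul_apply, RingHom.id_apply, smul_eq_mul]
    ring
  left_inv x := by
    apply lp.ext
    funext j
    rw [permFun_apply]
    rw [permFun_apply]
    rw [← mul_assoc, eps_sq ε hε, one_mul, Equiv.apply_symm_apply]
  right_inv y := by
    apply lp.ext
    funext i
    rw [permFun_apply, permFun_apply, Equiv.symm_apply_apply, ← mul_assoc, eps_sq ε hε, one_mul]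
  norm_map' x := by
    rw [lp.norm_eq_tsum_rpow two_toReal_pos, lp.norm_eq_tsum_rpow two_toReal_pos x]
    congr 1
    have := σ.tsum_eq (f := fun j => ‖x j‖ ^ (2 : ℝ≥0∞).toReal)
    rw [← this]
    refine tsum_congr fun i => ?_
    show ‖(permFun σ ε hε x : ∀ _ : ι, ℝ) i‖ ^ _ = _
    rw [permFun_apply, norm_mul, eps_norm ε hε, one_mul]

lemma permEquiv_apply (hε : ∀ i, ε i = 1 ∨ ε i = -1) (x : ℓ²) (i : ι) : (permEquiv σ ε hε x : ∀ _ : ι, ℝ) i = ε i * x (σ i) := rfl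

end Perm

variable {H : Type*} [NormedAddCommGroup H] [InnerProductSpace ℝ H] [CompleteSpace H]

lemma adjoint_isometryEquiv (g : H ≃ₗᵢ[ℝ] H) :
    ContinuousLinearMap.adjoint (g : H →L[ℝ] H) = (g.symm : H →L[ℝ] H) := by
  symm
  rw [ContinuousLinearMap.eq_adjoint_iff]
  intro x y
  simp only [LinearIsometryEquiv.coe_coe'']
  have h1 : (inner ℝ (g (g.symm x)) (g y) : ℝ) = inner ℝ (g.symm x) y := g.inner_map_map _ _
  rw [g.apply_symm_apply] at h1
  exact h1.symm

lemma infinite_of_hilbertBasis (hH : ¬ FiniteDimensional ℝ H)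
    {w : Set H} (b : HilbertBasis w ℝ H) : Infinite w := by
  by_contra h
  haveI : Finite w := not_infinite_iff_finite.mp h
  apply hH
  have hfin : (Set.range ⇑b).Finite := Set.finite_range _
  haveI : FiniteDimensional ℝ (Submodule.span ℝ (Set.range ⇑b)) :=
    FiniteDimensional.span_of_finite ℝ hfin
  have hclosed : IsClosed ((Submodule.span ℝ (Set.range ⇑b)) : Set H) :=
    Submodule.closed_of_finiteDimensional _
  have htop : Submodule.span ℝ (Set.range ⇑b) = ⊤ := by
    rw [← hclosed.submodule_topologicalClosure_eq]
    exact b.dense_span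
  exact ⟨Submodule.fg_def.2 ⟨Set.range ⇑b, hfin, htop⟩⟩

lemma exists_JC (hH : ¬ FiniteDimensional ℝ H) :
    ∃ J C : H →L[ℝ] H, star J = -J ∧ J * J = -1 ∧ C ∈ unitary (H →L[ℝ] H) ∧
      star C = C ∧ C * J = -(J * C) := by
  obtain ⟨w, b, -⟩ := exists_hilbertBasis ℝ H
  haveI : Infinite w := infinite_of_hilbertBasis hH b
  -- an equivalence ι ≃ ι ⊕ ι
  have hcard : Cardinal.mk (↥w ⊕ ↥w) = Cardinal.mk ↥w := by
    rw [Cardinal.mk_sum]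
    simp only [Cardinal.lift_id]
    exact Cardinal.add_eq_self (Cardinal.aleph0_le_mk ↥w)
  obtain ⟨e⟩ := Cardinal.eq.1 hcard
  set d : ↥w ≃ ↥w ⊕ ↥w := e.symm with hd
  -- data for J
  set σJ : ↥w ≃ ↥w := d.trans ((Equiv.sumComm ↥w ↥w).trans d.symm) with hσJ
  set εJ : ↥w → ℝ := fun i => Sum.elim (fun _ => (-1:ℝ)) (fun _ => 1) (d i) with hεJ
  have hεJ' : ∀ i, εJ i = 1 ∨ εJ i = -1 := by
    intro i; rcases h : d i with a | a <;> simp [hεJ, h]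
  -- data for C
  set εC : ↥w → ℝ := fun i => Sum.elim (fun _ => (1:ℝ)) (fun _ => -1) (d i) with hεC
  have hεC' : ∀ i, εC i = 1 ∨ εC i = -1 := by
    intro i; rcases h : d i with a | a <;> simp [hεC, h]
  -- pointwise facts
  have hdσJ : ∀ i, d (σJ i) = Sum.swap (d i) := by
    intro i; simp [hσJ, Equiv.sumComm_apply]
  have hσJσJ : ∀ i, σJ (σJ i) = i := by
    intro i
    have : σJ (σJ i) = d.symm (Sum.swap (d (σJ i))) := by simp [hσJ, Equiv.sumComm_apply]
    rw [this, hdσJ, Sum.swap_swap, Equiv.symm_apply_apply]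
  have hεJεJ : ∀ i, εJ i * εJ (σJ i) = -1 := by
    intro i
    have h2 := hdσJ i
    rcases h : d i with a | a <;> simp [hεJ, h, h2]
  have hεCσJ : ∀ i, εC (σJ i) = -εC i := by
    intro i
    have h2 := hdσJ i
    rcases h : d i with a | a <;> simp [hεC, h, h2]
  -- lp level maps
  set J₀ := permEquiv σJ εJ hεJ' with hJ₀
  set C₀ := permEquiv (Equiv.refl ↥w) εC hεC' with hC₀
  have hJ₀J₀ : ∀ x, J₀ (J₀ x) = -x := by
    intro x
    apply lp.ext
    funext i
    have h1 := permEquiv_apply σJ εJ hεJ' (J₀ x) i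
    have h2 := permEquiv_apply σJ εJ hεJ' x (σJ i)
    rw [← hJ₀] at h1 h2
    show (J₀ (J₀ x) : ∀ _ : ↥w, ℝ) i = (-x : lp _ 2) i
    rw [h1, h2, hσJσJ, lp.coeFn_neg, Pi.neg_apply, ← mul_assoc, hεJεJ]
    ring
  have hC₀C₀ : ∀ x, C₀ (C₀ x) = x := by
    intro x
    apply lp.ext
    funext i
    have h1 := permEquiv_apply (Equiv.refl ↥w) εC hεC' (C₀ x) i
    have h2 := permEquiv_apply (Equiv.refl ↥w) εC hεC' x i
    rw [← hC₀] at h1 h2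
    show (C₀ (C₀ x) : ∀ _ : ↥w, ℝ) i = _
    rw [h1]
    simp only [Equiv.refl_apply] at h2 ⊢
    rw [h2, ← mul_assoc]
    rcases hεC' i with h | h <;> rw [h] <;> ring
  have hC₀J₀ : ∀ x, C₀ (J₀ x) = -(J₀ (C₀ x)) := by
    intro x
    apply lp.ext
    funext i
    have h1 := permEquiv_apply (Equiv.refl ↥w) εC hεC' (J₀ x) i
    have h2 := permEquiv_apply σJ εJ hεJ' x i
    have h3 := permEquiv_apply σJ εJ hεJ' (C₀ x) i
    have h4 := permEquiv_apply (Equiv.refl ↥w) εC hεC' x (σJ i)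
    rw [← hJ₀] at h2 h3
    rw [← hC₀] at h1 h4
    show (C₀ (J₀ x) : ∀ _ : ↥w, ℝ) i = (-(J₀ (C₀ x)) : lp _ 2) i
    rw [lp.coeFn_neg, Pi.neg_apply, h1, h3]
    simp only [Equiv.refl_apply] at h1 h4 ⊢
    rw [h2, h4, hεCσJ]
    ring
  -- transport to H
  set gJ : H ≃ₗᵢ[ℝ] H := (b.repr.trans J₀).trans b.repr.symm with hgJ
  set gC : H ≃ₗᵢ[ℝ] H := (b.repr.trans C₀).trans b.repr.symm with hgC
  have hgJ_apply : ∀ v, gJ v = b.repr.symm (J₀ (b.repr v)) := fun v => rfl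
  have hgC_apply : ∀ v, gC v = b.repr.symm (C₀ (b.repr v)) := fun v => rfl
  have hgJgJ : ∀ v, gJ (gJ v) = -v := by
    intro v
    rw [hgJ_apply, hgJ_apply, LinearIsometryEquiv.apply_symm_apply, hJ₀J₀, map_neg,
      LinearIsometryEquiv.symm_apply_apply]
  have hgCgC : ∀ v, gC (gC v) = v := by
    intro v
    rw [hgC_apply, hgC_apply, LinearIsometryEquiv.apply_symm_apply, hC₀C₀,
      LinearIsometryEquiv.symm_apply_apply]
  have hgCgJ : ∀ v, gC (gJ v) = -(gJ (gC v)) := by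
    intro v
    rw [hgC_apply, hgJ_apply, LinearIsometryEquiv.apply_symm_apply, hC₀J₀, map_neg, hgJ_apply,
      hgC_apply, LinearIsometryEquiv.apply_symm_apply]
  refine ⟨(gJ : H →L[ℝ] H), (gC : H →L[ℝ] H), ?_, ?_, ?_, ?_, ?_⟩
  · rw [ContinuousLinearMap.star_eq_adjoint, adjoint_isometryEquiv]
    ext v
    show gJ.symm v = -(gJ v)
    apply gJ.injective
    rw [gJ.apply_symm_apply, map_neg, hgJgJ, neg_neg]
  · ext v
    show gJ (gJ v) = -v
    exact hgJgJ v
  · have hstarC : star (gC : H →L[ℝ] H) = (gC : H →L[ℝ] H) := by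
      rw [ContinuousLinearMap.star_eq_adjoint, adjoint_isometryEquiv]
      ext v
      show gC.symm v = gC v
      apply gC.injective
      rw [gC.apply_symm_apply, hgCgC]
    have hCC : (gC : H →L[ℝ] H) * (gC : H →L[ℝ] H) = 1 := by
      ext v
      show gC (gC v) = v
      exact hgCgC v
    exact Unitary.mem_iff.mpr ⟨by rw [hstarC, hCC], by rw [hstarC, hCC]⟩
  · rw [ContinuousLinearMap.star_eq_adjoint, adjoint_isometryEquiv]
    ext v
    show gC.symm v = gC v
    apply gC.injective
    rw [gC.apply_symm_apply, hgCgC]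
  · ext v
    show gC (gJ v) = -(gJ (gC v))
    exact hgCgJ v


end BddOrthComb

/-- every bounded operator on an infinite-dimensional real Hilbert space is
a finite real linear combination of orthogonal (unitary) operators. -/
theorem bounded_op_linear_combination_of_orthogonals
    {H : Type*} [NormedAddCommGroup H] [InnerProductSpace ℝ H] [CompleteSpace H]
    (hH : ¬ FiniteDimensional ℝ H)
    (T : H →L[ℝ] H) :
    ∃ (n : ℕ) (c : Fin n → ℝ) (U : Fin n → (H →L[ℝ] H)),
      (∀ i, U i ∈ unitary (H →L[ℝ] H)) ∧ T = ∑ i, c i • U i := by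
  obtain ⟨J, C, hJs, hJ2, hCu, hCs, hCJ⟩ := BddOrthComb.exists_JC hH
  have hT : T ∈ BddOrthComb.uspan (H →L[ℝ] H) :=
    BddOrthComb.all_mem_uspan J C T hJs hJ2 hCu hCs hCJ
  rw [BddOrthComb.uspan, Submodule.mem_span_set'] at hT
  obtain ⟨n, f, g, hsum⟩ := hT
  exact ⟨n, f, fun i => (g i : H →L[ℝ] H), fun i => (g i).2, hsum.symm⟩
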